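/- Let T_A, T_D be n×n row-stochastic matrices with all entries of T_A at least t_a* > 0 and all of T_D at least t_d* > 0. Let α₁,…,αₙ ≥ 0 with α_sum > 0 and α_max = maxⱼ αⱼ. Define τ_A(b) = T_Aᵀ·cond(b) and τ_D(b) = T_Dᵀ·cond(b) where cond(b)ⱼ = αⱼbⱼ/(Σᵢαᵢbᵢ). Then for probability vectors b₁ with entries ≥ t_a* and b₂ with entries ≥ t_d*: ‖τ_A(b₁) − τ_D(b₂)‖₁ ≤ ‖(T_A − T_D)ᵀ‖₁ + ((1 − n·t_max)·α_max/(t_min·α_sum))·‖b₁ − b₂‖₁, where t_max = max(t_a*, t_d*), t_min = min(t_a*, t_d*). -/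

import Mathlib

open Finset

private lemma abs_eq_two_max' (x : ℝ) : |x| = 2 * max x 0 - x := by
  rcases le_total 0 x with h | h
  · rw [abs_of_nonneg h, max_eq_left h]; ring
  · rw [abs_of_nonpos h, max_eq_right h]; ring

private lemma sum_abs_of_sum_zero' {n : ℕ} (e : Fin n → ℝ) (h : ∑ i, e i = 0) :
    ∑ i, |e i| = 2 * ∑ i, max (e i) 0 := by
  have h1 : ∑ i, |e i| = ∑ i, (2 * max (e i) 0 - e i) :=
    Finset.sum_congr rfl fun i _ => abs_eq_two_max' (e i)
  rw [h1, Finset.sum_sub_distrib, h, ← Finset.mul_sum]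
  ring

private lemma contraction' {n : ℕ} (P : Matrix (Fin n) (Fin n) ℝ) (t : ℝ)
    (hent : ∀ i j, t ≤ P i j) (hrows : ∀ i, ∑ j, P i j = 1)
    (e : Fin n → ℝ) (he : ∑ i, e i = 0) :
    ∑ j, |∑ i, P i j * e i| ≤ (1 - (n : ℝ) * t) * ∑ i, |e i| := by
  have h1 : ∀ j, ∑ i, P i j * e i = ∑ i, (P i j - t) * e i := by
    intro j
    simp only [sub_mul, Finset.sum_sub_distrib, ← Finset.mul_sum, he, mul_zero, sub_zero]
  calc ∑ j, |∑ i, P i j * e i| = ∑ j, |∑ i, (P i j - t) * e i| := by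
        exact Finset.sum_congr rfl fun j _ => by rw [h1]
    _ ≤ ∑ j, ∑ i, |(P i j - t) * e i| :=
        Finset.sum_le_sum fun j _ => Finset.abs_sum_le_sum_abs _ _
    _ = ∑ i, ∑ j, (P i j - t) * |e i| := by
        rw [Finset.sum_comm]
        exact Finset.sum_congr rfl fun i _ => Finset.sum_congr rfl fun j _ => by
          rw [abs_mul, abs_of_nonneg (sub_nonneg.2 (hent i j))]
    _ = ∑ i, (1 - (n : ℝ) * t) * |e i| := by
        refine Finset.sum_congr rfl fun i _ => ?_
        rw [← Finset.sum_mul, Finset.sum_sub_distrib, hrows i, Finset.sum_const,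
          Finset.card_univ, Fintype.card_fin, nsmul_eq_mul]
    _ = (1 - (n : ℝ) * t) * ∑ i, |e i| := (Finset.mul_sum _ _ _).symm

private lemma diff_term' {n : ℕ} [NeZero n] (A B : Matrix (Fin n) (Fin n) ℝ)
    (d : Fin n → ℝ) (hd : ∀ i, 0 ≤ d i) (hds : ∑ i, d i = 1) :
    ∑ j, |∑ i, (A i j - B i j) * d i|
      ≤ Finset.univ.sup' Finset.univ_nonempty (fun j => ∑ i, |A j i - B j i|) := by
  set M := Finset.univ.sup' Finset.univ_nonempty (fun j => ∑ i, |A j i - B j i|) with hM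
  calc ∑ j, |∑ i, (A i j - B i j) * d i|
      ≤ ∑ j, ∑ i, |A i j - B i j| * d i := by
        refine Finset.sum_le_sum fun j _ => ?_
        refine le_trans (Finset.abs_sum_le_sum_abs _ _) (le_of_eq ?_)
        exact Finset.sum_congr rfl fun i _ => by rw [abs_mul, abs_of_nonneg (hd i)]
    _ = ∑ i, d i * ∑ j, |A i j - B i j| := by
        rw [Finset.sum_comm]
        refine Finset.sum_congr rfl fun i _ => ?_
        rw [Finset.mul_sum]
        exact Finset.sum_congr rfl fun j _ => by ring
    _ ≤ ∑ i, d i * M := by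
        refine Finset.sum_le_sum fun i _ => mul_le_mul_of_nonneg_left ?_ (hd i)
        exact Finset.le_sup' (fun j => ∑ k, |A j k - B j k|) (Finset.mem_univ i)
    _ = M := by rw [← Finset.sum_mul, hds, one_mul]

private lemma cond_half' {n : ℕ} (α b₁ b₂ : Fin n → ℝ) (hα : ∀ j, 0 ≤ α j)
    (αmax : ℝ) (hαm0 : 0 ≤ αmax) (hαmax : ∀ j, α j ≤ αmax)
    (hb₁ : ∀ i, 0 ≤ b₁ i) (hb₁s : ∑ i, b₁ i = 1) (hb₂s : ∑ i, b₂ i = 1)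
    (S₁ S₂ : ℝ) (hS₁ : S₁ = ∑ k, α k * b₁ k) (hS₂ : S₂ = ∑ k, α k * b₂ k)
    (hS₂pos : 0 < S₂) (hle : S₂ ≤ S₁) :
    ∑ i, |α i * b₁ i / S₁ - α i * b₂ i / S₂|
      ≤ αmax * (∑ j, |b₁ j - b₂ j|) / S₂ := by
  have hS₁pos : 0 < S₁ := lt_of_lt_of_le hS₂pos hle
  have hesum : ∑ i, (α i * b₁ i / S₁ - α i * b₂ i / S₂) = 0 := by
    rw [Finset.sum_sub_distrib, ← Finset.sum_div, ← Finset.sum_div, ← hS₁, ← hS₂,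
      div_self (ne_of_gt hS₁pos), div_self (ne_of_gt hS₂pos), sub_self]
  have hΔsum : ∑ i, (b₁ i - b₂ i) = 0 := by
    rw [Finset.sum_sub_distrib, hb₁s, hb₂s, sub_self]
  have key : ∀ i, max (α i * b₁ i / S₁ - α i * b₂ i / S₂) 0
      ≤ αmax * max (b₁ i - b₂ i) 0 / S₂ := by
    intro i
    have hnum : 0 ≤ α i * b₁ i := mul_nonneg (hα i) (hb₁ i)
    have h1 : α i * b₁ i / S₁ ≤ α i * b₁ i / S₂ := by gcongr
    have h2 : α i * b₁ i / S₁ - α i * b₂ i / S₂ ≤ α i * (b₁ i - b₂ i) / S₂ := by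
      have : α i * (b₁ i - b₂ i) / S₂ = α i * b₁ i / S₂ - α i * b₂ i / S₂ := by ring
      rw [this]; linarith
    rcases le_total (b₁ i - b₂ i) 0 with h | h
    · have : α i * (b₁ i - b₂ i) / S₂ ≤ 0 :=
        div_nonpos_of_nonpos_of_nonneg (mul_nonpos_of_nonneg_of_nonpos (hα i) h)
          (le_of_lt hS₂pos)
      have hmax0 : max (b₁ i - b₂ i) 0 = 0 := max_eq_right h
      rw [hmax0, mul_zero, zero_div]
      exact max_le (by linarith) le_rfl
    · have hmax : max (b₁ i - b₂ i) 0 = b₁ i - b₂ i := max_eq_left h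
      rw [hmax]
      refine max_le (le_trans h2 ?_) ?_
      · gcongr; exact hαmax i
      · exact div_nonneg (mul_nonneg hαm0 h) (le_of_lt hS₂pos)
  have hΔabs : ∑ j, |b₁ j - b₂ j| = 2 * ∑ j, max (b₁ j - b₂ j) 0 :=
    sum_abs_of_sum_zero' _ hΔsum
  calc ∑ i, |α i * b₁ i / S₁ - α i * b₂ i / S₂|
      = 2 * ∑ i, max (α i * b₁ i / S₁ - α i * b₂ i / S₂) 0 :=
        sum_abs_of_sum_zero' _ hesum
    _ ≤ 2 * ∑ i, αmax * max (b₁ i - b₂ i) 0 / S₂ := by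
        have := Finset.sum_le_sum fun i (_ : i ∈ Finset.univ) => key i
        linarith
    _ = αmax * (∑ j, |b₁ j - b₂ j|) / S₂ := by
        rw [hΔabs]
        rw [← Finset.sum_div, ← Finset.mul_sum]
        ring

private lemma cond_full' {n : ℕ} (α b₁ b₂ : Fin n → ℝ) (hα : ∀ j, 0 ≤ α j)
    (αmax : ℝ) (hαm0 : 0 ≤ αmax) (hαmax : ∀ j, α j ≤ αmax)
    (hb₁ : ∀ i, 0 ≤ b₁ i) (hb₂ : ∀ i, 0 ≤ b₂ i)
    (hb₁s : ∑ i, b₁ i = 1) (hb₂s : ∑ i, b₂ i = 1)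
    (S₁ S₂ : ℝ) (hS₁ : S₁ = ∑ k, α k * b₁ k) (hS₂ : S₂ = ∑ k, α k * b₂ k)
    (hS₁pos : 0 < S₁) (hS₂pos : 0 < S₂)
    (S : ℝ) (hSpos : 0 < S) (hSS₁ : S ≤ S₁) (hSS₂ : S ≤ S₂) :
    ∑ i, |α i * b₁ i / S₁ - α i * b₂ i / S₂|
      ≤ αmax * (∑ j, |b₁ j - b₂ j|) / S := by
  have hD0 : 0 ≤ ∑ j, |b₁ j - b₂ j| := Finset.sum_nonneg fun j _ => abs_nonneg _
  rcases le_total S₂ S₁ with hle | hle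
  · calc ∑ i, |α i * b₁ i / S₁ - α i * b₂ i / S₂|
        ≤ αmax * (∑ j, |b₁ j - b₂ j|) / S₂ :=
          cond_half' α b₁ b₂ hα αmax hαm0 hαmax hb₁ hb₁s hb₂s S₁ S₂ hS₁ hS₂ hS₂pos hle
      _ ≤ αmax * (∑ j, |b₁ j - b₂ j|) / S := by gcongr
  · have hsymm : ∑ i, |α i * b₁ i / S₁ - α i * b₂ i / S₂|
        = ∑ i, |α i * b₂ i / S₂ - α i * b₁ i / S₁| :=
      Finset.sum_congr rfl fun i _ => abs_sub_comm _ _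
    have hΔsymm : ∑ j, |b₂ j - b₁ j| = ∑ j, |b₁ j - b₂ j| :=
      Finset.sum_congr rfl fun j _ => abs_sub_comm _ _
    calc ∑ i, |α i * b₁ i / S₁ - α i * b₂ i / S₂|
        = ∑ i, |α i * b₂ i / S₂ - α i * b₁ i / S₁| := hsymm
      _ ≤ αmax * (∑ j, |b₂ j - b₁ j|) / S₁ :=
          cond_half' α b₂ b₁ hα αmax hαm0 hαmax hb₂ hb₂s hb₁s S₂ S₁ hS₂ hS₁ hS₁pos hle
      _ = αmax * (∑ j, |b₁ j - b₂ j|) / S₁ := by rw [hΔsymm]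
      _ ≤ αmax * (∑ j, |b₁ j - b₂ j|) / S := by gcongr

/-- Bound on the distance between belief updates τ_A(b₁) = T_Aᵀ·cond(b₁) and
τ_D(b₂) = T_Dᵀ·cond(b₂) under actual and design transition matrices. -/
theorem tauA_tauD_discrepancy_bound
    (n : ℕ) [NeZero n] (TA TD : Matrix (Fin n) (Fin n) ℝ)
    (ta td : ℝ) (hta : 0 < ta) (htd : 0 < td)
    (hTA_entries : ∀ i j, ta ≤ TA i j) (hTA_rows : ∀ i, ∑ j, TA i j = 1)
    (hTD_entries : ∀ i j, td ≤ TD i j) (hTD_rows : ∀ i, ∑ j, TD i j = 1)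
    (α : Fin n → ℝ) (hα : ∀ j, 0 ≤ α j)
    (αsum αmax : ℝ)
    (hαsum : αsum = ∑ j, α j) (hαsum_pos : 0 < αsum)
    (hαmax : αmax = Finset.univ.sup' Finset.univ_nonempty α)
    (b₁ b₂ : Fin n → ℝ)
    (hb₁_lb : ∀ i, ta ≤ b₁ i) (hb₁_sum : ∑ i, b₁ i = 1)
    (hb₂_lb : ∀ i, td ≤ b₂ i) (hb₂_sum : ∑ i, b₂ i = 1) :
    ∑ j, |(∑ i, TA i j * (α i * b₁ i / (∑ k, α k * b₁ k)))
          - (∑ i, TD i j * (α i * b₂ i / (∑ k, α k * b₂ k)))|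
      ≤ Finset.univ.sup' Finset.univ_nonempty (fun j => ∑ i, |TA j i - TD j i|)
        + ((1 - (n : ℝ) * max ta td) * αmax / (min ta td * αsum))
            * ∑ j, |b₁ j - b₂ j| := by
  have hb₁0 : ∀ i, 0 ≤ b₁ i := fun i => le_trans (le_of_lt hta) (hb₁_lb i)
  have hb₂0 : ∀ i, 0 ≤ b₂ i := fun i => le_trans (le_of_lt htd) (hb₂_lb i)
  set S₁ : ℝ := ∑ k, α k * b₁ k with hS₁def
  set S₂ : ℝ := ∑ k, α k * b₂ k with hS₂def
  have hS₁lb : ta * αsum ≤ S₁ := by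
    rw [hαsum, Finset.mul_sum, hS₁def]
    exact Finset.sum_le_sum fun k _ => by
      rw [mul_comm (ta) (α k)]
      exact mul_le_mul_of_nonneg_left (hb₁_lb k) (hα k)
  have hS₂lb : td * αsum ≤ S₂ := by
    rw [hαsum, Finset.mul_sum, hS₂def]
    exact Finset.sum_le_sum fun k _ => by
      rw [mul_comm (td) (α k)]
      exact mul_le_mul_of_nonneg_left (hb₂_lb k) (hα k)
  have hS₁pos : 0 < S₁ := lt_of_lt_of_le (mul_pos hta hαsum_pos) hS₁lb
  have hS₂pos : 0 < S₂ := lt_of_lt_of_le (mul_pos htd hαsum_pos) hS₂lb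
  set c : Fin n → ℝ := fun i => α i * b₁ i / S₁ with hcdef
  set d : Fin n → ℝ := fun i => α i * b₂ i / S₂ with hddef
  have hc0 : ∀ i, 0 ≤ c i := fun i =>
    div_nonneg (mul_nonneg (hα i) (hb₁0 i)) (le_of_lt hS₁pos)
  have hd0 : ∀ i, 0 ≤ d i := fun i =>
    div_nonneg (mul_nonneg (hα i) (hb₂0 i)) (le_of_lt hS₂pos)
  have hcs : ∑ i, c i = 1 := by
    rw [hcdef]; rw [← Finset.sum_div, ← hS₁def, div_self (ne_of_gt hS₁pos)]
  have hds : ∑ i, d i = 1 := by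
    rw [hddef]; rw [← Finset.sum_div, ← hS₂def, div_self (ne_of_gt hS₂pos)]
  have hes : ∑ i, (c i - d i) = 0 := by
    rw [Finset.sum_sub_distrib, hcs, hds, sub_self]
  have hαmax' : ∀ j, α j ≤ αmax := fun j => by
    rw [hαmax]; exact Finset.le_sup' α (Finset.mem_univ j)
  have hαm0 : 0 ≤ αmax := le_trans (hα 0) (hαmax' 0)
  -- S bounds against min ta td * αsum
  set S : ℝ := min ta td * αsum with hSdef
  have hSpos : 0 < S := mul_pos (lt_min hta htd) hαsum_pos
  have hSS₁ : S ≤ S₁ :=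
    le_trans (mul_le_mul_of_nonneg_right (min_le_left _ _) (le_of_lt hαsum_pos)) hS₁lb
  have hSS₂ : S ≤ S₂ :=
    le_trans (mul_le_mul_of_nonneg_right (min_le_right _ _) (le_of_lt hαsum_pos)) hS₂lb
  have hcond : ∑ i, |c i - d i| ≤ αmax * (∑ j, |b₁ j - b₂ j|) / S :=
    cond_full' α b₁ b₂ hα αmax hαm0 hαmax' hb₁0 hb₂0 hb₁_sum hb₂_sum S₁ S₂ rfl rfl
      hS₁pos hS₂pos S hSpos hSS₁ hSS₂
  have hD0 : 0 ≤ ∑ j, |b₁ j - b₂ j| := Finset.sum_nonneg fun j _ => abs_nonneg _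
  -- n * ta ≤ 1 and n * td ≤ 1
  have hnta : (n : ℝ) * ta ≤ 1 := by
    have := hTA_rows 0
    have h2 : ∑ j : Fin n, ta ≤ ∑ j, TA 0 j := Finset.sum_le_sum fun j _ => hTA_entries 0 j
    rw [this] at h2
    simpa [Finset.sum_const, Finset.card_univ, nsmul_eq_mul] using h2
  have hntd : (n : ℝ) * td ≤ 1 := by
    have := hTD_rows 0
    have h2 : ∑ j : Fin n, td ≤ ∑ j, TD 0 j := Finset.sum_le_sum fun j _ => hTD_entries 0 j
    rw [this] at h2
    simpa [Finset.sum_const, Finset.card_univ, nsmul_eq_mul] using h2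
  set M := Finset.univ.sup' Finset.univ_nonempty (fun j => ∑ i, |TA j i - TD j i|) with hMdef
  rcases le_total td ta with hcase | hcase
  · -- max ta td = ta
    have hmax : max ta td = ta := max_eq_left hcase
    have hmin : min ta td = td := min_eq_right hcase
    have hcontr : (0:ℝ) ≤ 1 - (n:ℝ) * ta := by linarith
    have hdecomp : ∀ j, (∑ i, TA i j * c i) - (∑ i, TD i j * d i)
        = (∑ i, (TA i j - TD i j) * d i) + ∑ i, TA i j * (c i - d i) := by
      intro j
      rw [← Finset.sum_add_distrib, ← Finset.sum_sub_distrib]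
      exact Finset.sum_congr rfl fun i _ => by ring
    calc ∑ j, |(∑ i, TA i j * c i) - (∑ i, TD i j * d i)|
        ≤ ∑ j, (|∑ i, (TA i j - TD i j) * d i| + |∑ i, TA i j * (c i - d i)|) := by
          refine Finset.sum_le_sum fun j _ => ?_
          rw [hdecomp j]; exact abs_add_le _ _
      _ = (∑ j, |∑ i, (TA i j - TD i j) * d i|) + ∑ j, |∑ i, TA i j * (c i - d i)| :=
          Finset.sum_add_distrib
      _ ≤ M + (1 - (n:ℝ) * ta) * ∑ i, |c i - d i| := by
          gcongr
          · exact diff_term' TA TD d hd0 hds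
          · exact contraction' TA ta hTA_entries hTA_rows _ hes
      _ ≤ M + (1 - (n:ℝ) * ta) * (αmax * (∑ j, |b₁ j - b₂ j|) / S) :=
          add_le_add le_rfl (mul_le_mul_of_nonneg_left hcond hcontr)
      _ = M + ((1 - (n : ℝ) * max ta td) * αmax / (min ta td * αsum))
            * ∑ j, |b₁ j - b₂ j| := by
          rw [hmax, hmin, hSdef, hmin]; ring
  · -- max ta td = td
    have hmax : max ta td = td := max_eq_right hcase
    have hmin : min ta td = ta := min_eq_left hcase
    have hcontr : (0:ℝ) ≤ 1 - (n:ℝ) * td := by linarith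
    have hdecomp : ∀ j, (∑ i, TA i j * c i) - (∑ i, TD i j * d i)
        = (∑ i, (TA i j - TD i j) * c i) + ∑ i, TD i j * (c i - d i) := by
      intro j
      rw [← Finset.sum_add_distrib, ← Finset.sum_sub_distrib]
      exact Finset.sum_congr rfl fun i _ => by ring
    calc ∑ j, |(∑ i, TA i j * c i) - (∑ i, TD i j * d i)|
        ≤ ∑ j, (|∑ i, (TA i j - TD i j) * c i| + |∑ i, TD i j * (c i - d i)|) := by
          refine Finset.sum_le_sum fun j _ => ?_
          rw [hdecomp j]; exact abs_add_le _ _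
      _ = (∑ j, |∑ i, (TA i j - TD i j) * c i|) + ∑ j, |∑ i, TD i j * (c i - d i)| :=
          Finset.sum_add_distrib
      _ ≤ M + (1 - (n:ℝ) * td) * ∑ i, |c i - d i| := by
          gcongr
          · exact diff_term' TA TD c hc0 hcs
          · exact contraction' TD td hTD_entries hTD_rows _ hes
      _ ≤ M + (1 - (n:ℝ) * td) * (αmax * (∑ j, |b₁ j - b₂ j|) / S) :=
          add_le_add le_rfl (mul_le_mul_of_nonneg_left hcond hcontr)
      _ = M + ((1 - (n : ℝ) * max ta td) * αmax / (min ta td * αsum))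
            * ∑ j, |b₁ j - b₂ j| := by
          rw [hmax, hmin, hSdef, hmin]; ring
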